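/- Let 0 ≤ a ≤ x with x ≤ √(2/π). Then the integral ∫_a^x [cos(2t√(t²−a²)) + t·sin(2t√(t²−a²))/√(t²−a²)] dt is non-negative, and it equals zero if and only if a = x. -/

import Mathlib

open Complex MeasureTheory

/-- The error function, `erf z = (2/√π) ∫₀^z e^{-u²} du`, integrated along the
segment from `0` to `z` (the integrand is entire, so the path is immaterial). -/
noncomputable def erf (z : ℂ) : ℂ :=
  (2 / Real.sqrt Real.pi : ℝ) * ∫ t in (0:ℝ)..1, z * Complex.exp (-((t : ℂ) * z) ^ 2)

/-- The complementary error function, `erfc z = (2/√π) ∫_z^∞ e^{-u²} du`,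
integrated along the horizontal ray from `z` to `+∞`. -/
noncomputable def erfc (z : ℂ) : ℂ :=
  (2 / Real.sqrt Real.pi : ℝ) * ∫ t in Set.Ioi (0:ℝ), Complex.exp (-(z + (t : ℂ)) ^ 2)

theorem integral_nonneg_key (a x : ℝ) (ha : 0 ≤ a) (hax : a ≤ x)
    (hx : x ≤ Real.sqrt (2 / Real.pi)) :
    0 ≤ (∫ t in a..x, (Real.cos (2 * t * Real.sqrt (t ^ 2 - a ^ 2)) +
        t * Real.sin (2 * t * Real.sqrt (t ^ 2 - a ^ 2)) / Real.sqrt (t ^ 2 - a ^ 2))) ∧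
    ((∫ t in a..x, (Real.cos (2 * t * Real.sqrt (t ^ 2 - a ^ 2)) +
        t * Real.sin (2 * t * Real.sqrt (t ^ 2 - a ^ 2)) / Real.sqrt (t ^ 2 - a ^ 2))) = 0 ↔
      a = x) := by
  set f : ℝ → ℝ := fun t => Real.cos (2 * t * Real.sqrt (t ^ 2 - a ^ 2)) +
      t * Real.sin (2 * t * Real.sqrt (t ^ 2 - a ^ 2)) / Real.sqrt (t ^ 2 - a ^ 2) with hf
  have hpi := Real.pi_pos
  have hpi3 := Real.pi_gt_three
  have hx0 : 0 ≤ x := le_trans ha hax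
  have hx2 : Real.pi * x ^ 2 ≤ 2 := by
    have h1 : x ^ 2 ≤ 2 / Real.pi := by
      have h2 := Real.sq_sqrt (by positivity : (0:ℝ) ≤ 2 / Real.pi)
      nlinarith [pow_le_pow_left₀ hx0 hx 2]
    have h3 := (le_div_iff₀ hpi).mp h1
    linarith
  have hkey : ∀ t, a ≤ t → t ≤ x →
      0 ≤ 2 * t * Real.sqrt (t ^ 2 - a ^ 2) ∧
      2 * t * Real.sqrt (t ^ 2 - a ^ 2) < Real.pi / 2 := by
    intro t hat htx
    have ht0 : 0 ≤ t := le_trans ha hat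
    have hs0 : 0 ≤ Real.sqrt (t ^ 2 - a ^ 2) := Real.sqrt_nonneg _
    have hs : Real.sqrt (t ^ 2 - a ^ 2) ≤ t := by
      calc Real.sqrt (t ^ 2 - a ^ 2) ≤ Real.sqrt (t ^ 2) :=
            Real.sqrt_le_sqrt (by nlinarith)
        _ = t := by rw [Real.sqrt_sq ht0]
    refine ⟨by positivity, ?_⟩
    have h1 : 2 * t * Real.sqrt (t ^ 2 - a ^ 2) ≤ 2 * x ^ 2 := by nlinarith
    nlinarith [sq_nonneg (Real.pi - 3), sq_nonneg x]
  have hnn : ∀ t ∈ Set.Icc a x, 0 ≤ f t := by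
    intro t ht
    obtain ⟨h0, h1⟩ := hkey t ht.1 ht.2
    have hc := Real.cos_nonneg_of_mem_Icc ⟨by linarith, le_of_lt h1⟩
    have hsin := Real.sin_nonneg_of_nonneg_of_le_pi h0 (by linarith)
    have ht0 : 0 ≤ t := le_trans ha ht.1
    exact add_nonneg hc (div_nonneg (mul_nonneg ht0 hsin) (Real.sqrt_nonneg _))
  have hpos : ∀ t ∈ Set.Ioo a x, 0 < f t := by
    intro t ht
    obtain ⟨h0, h1⟩ := hkey t ht.1.le ht.2.le
    have hc := Real.cos_pos_of_mem_Ioo ⟨by linarith, h1⟩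
    have hsin := Real.sin_nonneg_of_nonneg_of_le_pi h0 (by linarith)
    have ht0 : 0 ≤ t := le_trans ha ht.1.le
    exact add_pos_of_pos_of_nonneg hc
      (div_nonneg (mul_nonneg ht0 hsin) (Real.sqrt_nonneg _))
  have hm : Measurable f := by
    apply Measurable.add
    · exact Real.continuous_cos.measurable.comp (by fun_prop)
    · exact Measurable.div (by fun_prop) (by fun_prop)
  have hint : IntervalIntegrable f volume a x := by
    rw [intervalIntegrable_iff_integrableOn_Ioc_of_le hax]
    apply MeasureTheory.Integrable.mono'
      (g := fun _ : ℝ => (1 : ℝ) + 2 * x ^ 2)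
      (integrableOn_const measure_Ioc_lt_top.ne enorm_ne_top)
      hm.aestronglyMeasurable.restrict
    filter_upwards [ae_restrict_mem measurableSet_Ioc] with t ht
    have hta : a ≤ t := ht.1.le
    have htx : t ≤ x := ht.2
    have ht0 : 0 ≤ t := le_trans ha hta
    have hfnn := hnn t ⟨hta, htx⟩
    rw [Real.norm_eq_abs, _root_.abs_of_nonneg hfnn]
    have hs0 : 0 ≤ Real.sqrt (t ^ 2 - a ^ 2) := Real.sqrt_nonneg _
    have hc := Real.cos_le_one (2 * t * Real.sqrt (t ^ 2 - a ^ 2))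
    have hterm : t * Real.sin (2 * t * Real.sqrt (t ^ 2 - a ^ 2)) /
        Real.sqrt (t ^ 2 - a ^ 2) ≤ 2 * t ^ 2 := by
      rcases eq_or_lt_of_le hs0 with hz | hz
      · rw [← hz, div_zero]
        positivity
      · have hsle := Real.sin_le (by positivity : 0 ≤ 2 * t * Real.sqrt (t ^ 2 - a ^ 2))
        rw [div_le_iff₀ hz]
        nlinarith
    have htx2 : t ^ 2 ≤ x ^ 2 := by nlinarith
    have hsum : f t ≤ 1 + 2 * t ^ 2 := add_le_add hc hterm
    linarith
  constructor
  · exact intervalIntegral.integral_nonneg hax hnn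
  · constructor
    · intro h
      by_contra hne
      have hlt : a < x := lt_of_le_of_ne hax hne
      have := intervalIntegral.intervalIntegral_pos_of_pos_on hint hpos hlt
      rw [h] at this
      exact lt_irrefl 0 this
    · intro h; subst h; simp
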